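/- Let n ≥ 1 and consider an elitist (1+1) algorithm on the OneMax function on {0,1}^n whose mutation flips ℓ pairwise different, uniformly chosen bit positions, where ℓ is sampled from a distribution M on {0,1,…,n}; let q = P[ℓ = 1]/n > 0 (the probability of flipping exactly one particular bit and no other). If the algorithm is initialized with the all-zero string, then for every target 1 ≤ k ≤ n, the expected fixed-target time satisfies E[T_k] ≤ (H_n − H_{n−k}) / q. -/

import Mathlib

open MeasureTheory Finset

/-- The OneMax fitness: the number of one-bits of `x`. -/
def oneMax (n : ℕ) (x : Fin n → Bool) : ℕ :=
  (Finset.univ.filter (fun i : Fin n => x i = true)).card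

/-- The `i`-th harmonic number `H_i = ∑_{l=1}^i 1/l`, with `H_0 = 0`. -/
noncomputable def harm (i : ℕ) : ℝ := ∑ j ∈ Finset.range i, 1 / ((j : ℝ) + 1)

/-- Transition probability of an elitist (1+1) algorithm with fitness `f` (to be maximized)
and mutation distribution `q`: from `a`, the offspring `y ~ q a ·` is accepted iff
`f y ≥ f a`; otherwise the algorithm stays at `a`. -/
noncomputable def eaKernel (n : ℕ) (f : (Fin n → Bool) → ℕ)
    (q : (Fin n → Bool) → (Fin n → Bool) → ℝ) (a b : Fin n → Bool) : ℝ :=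
  (if f a ≤ f b then q a b else 0) +
    (if b = a then ∑ y ∈ Finset.univ.filter (fun y => f y < f a), q a y else 0)

/-- Mutation by flipping `ℓ` pairwise different, uniformly chosen bit positions, where `ℓ` is
sampled from a distribution `M` on `{0,…,n}`: the probability that mutating `x` gives `y`. -/
noncomputable def strengthMutProb (n : ℕ) (M : ℕ → ℝ) (x y : Fin n → Bool) : ℝ :=
  M (hammingDist x y) / (n.choose (hammingDist x y) : ℝ)

/-- `x` is a time-homogeneous Markov chain on the finite state space `S` with initial
distribution `init` and transition probabilities `K`, characterized via its
finite-dimensional distributions. -/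
def IsMarkovProcess {Ω S : Type*} [MeasurableSpace Ω] [MeasurableSpace S] [Fintype S]
    (μ : Measure Ω) (x : ℕ → Ω → S) (init : S → ℝ) (K : S → S → ℝ) : Prop :=
  (∀ t, Measurable (x t)) ∧
  (∀ a : S, μ {ω | x 0 ω = a} = ENNReal.ofReal (init a)) ∧
  (∀ t : ℕ, ∀ a : ℕ → S,
    μ {ω | ∀ s ≤ t + 1, x s ω = a s}
      = μ {ω | ∀ s ≤ t, x s ω = a s} * ENNReal.ofReal (K (a t) (a (t + 1))))

/-- First time at which the process `x` reaches a state satisfying `good`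
(`⊤` if this never happens). -/
noncomputable def hitTime {Ω S : Type*} (x : ℕ → Ω → S) (good : S → Prop) (ω : Ω) : ENNReal :=
  sInf {r : ENNReal | ∃ t : ℕ, r = (t : ENNReal) ∧ good (x t ω)}

section A
variable {n : ℕ} {M : ℕ → ℝ}

lemma oneMax_le (a : Fin n → Bool) : oneMax n a ≤ n := by
  simpa [oneMax] using (Finset.card_filter_le Finset.univ (fun i : Fin n => a i = true))

/-- flipping the bits in `s` -/
def flipSet (x : Fin n → Bool) (s : Finset (Fin n)) : Fin n → Bool :=
  fun i => if i ∈ s then !x i else x i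

lemma hammingDist_flipSet (x : Fin n → Bool) (s : Finset (Fin n)) :
    hammingDist x (flipSet x s) = s.card := by
  have : (Finset.univ.filter fun i => x i ≠ flipSet x s i) = s := by
    ext i
    by_cases h : i ∈ s <;> simp [flipSet, h]
  simp [hammingDist, this]

lemma flipSet_filter (x y : Fin n → Bool) :
    flipSet x (Finset.univ.filter fun i => x i ≠ y i) = y := by
  funext i
  by_cases h : x i = y i <;> simp [flipSet, h]
  · cases hx : x i <;> cases hy : y i <;> simp_all

lemma mut_nonneg (hM : ∀ i, 0 ≤ M i) (x y : Fin n → Bool) : 0 ≤ strengthMutProb n M x y := by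
  have := hM (hammingDist x y)
  have : (0:ℝ) ≤ (n.choose (hammingDist x y) : ℝ) := by positivity
  unfold strengthMutProb; positivity

lemma mut_row_sum (hMsum : ∑ i ∈ Finset.range (n + 1), M i = 1) (x : Fin n → Bool) :
    ∑ y : Fin n → Bool, strengthMutProb n M x y = 1 := by
  have h1 : ∑ s ∈ (Finset.univ : Finset (Fin n)).powerset, strengthMutProb n M x (flipSet x s)
      = ∑ y : Fin n → Bool, strengthMutProb n M x y := by
    refine Finset.sum_nbij' (fun s => flipSet x s)
      (fun y => Finset.univ.filter fun i => x i ≠ y i) ?_ ?_ ?_ ?_ ?_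
    · intro s _; exact Finset.mem_univ _
    · intro y _; exact Finset.mem_powerset.2 (Finset.filter_subset _ _)
    · intro s hs
      ext i
      by_cases h : i ∈ s <;> simp [flipSet, h]
    · intro y _; exact flipSet_filter x y
    · intro s _; rfl
  rw [← h1, Finset.sum_powerset]
  have h2 : ∀ j ∈ Finset.range (n+1),
      ∑ s ∈ Finset.powersetCard j (Finset.univ : Finset (Fin n)),
        strengthMutProb n M x (flipSet x s) = M j := by
    intro j hj
    have hjn : j ≤ n := Nat.lt_succ_iff.1 (Finset.mem_range.1 hj)
    have : ∀ s ∈ Finset.powersetCard j (Finset.univ : Finset (Fin n)),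
        strengthMutProb n M x (flipSet x s) = M j / (n.choose j : ℝ) := by
      intro s hs
      have hc : s.card = j := (Finset.mem_powersetCard.1 hs).2
      simp [strengthMutProb, hammingDist_flipSet, hc]
    rw [Finset.sum_congr rfl this, Finset.sum_const, Finset.card_powersetCard]
    have hpos : (0:ℝ) < (n.choose j : ℝ) := by
      exact_mod_cast Nat.choose_pos hjn
    simp [Finset.card_univ]
    field_simp
  calc ∑ j ∈ Finset.range (#(Finset.univ : Finset (Fin n)) + 1),
        ∑ s ∈ Finset.powersetCard j (Finset.univ : Finset (Fin n)),
          strengthMutProb n M x (flipSet x s)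
      = ∑ j ∈ Finset.range (n+1), M j := by
        rw [Finset.card_univ, Fintype.card_fin]
        exact Finset.sum_congr rfl h2
    _ = 1 := hMsum

lemma K_nonneg (hM : ∀ i, 0 ≤ M i) (f : (Fin n → Bool) → ℕ) (a b : Fin n → Bool) :
    0 ≤ eaKernel n f (strengthMutProb n M) a b := by
  unfold eaKernel
  have h1 : (0:ℝ) ≤ if f a ≤ f b then strengthMutProb n M a b else 0 := by
    split <;> [exact mut_nonneg hM a b; exact le_rfl]
  have h2 : (0:ℝ) ≤ if b = a then
      ∑ y ∈ Finset.univ.filter (fun y => f y < f a), strengthMutProb n M a y else 0 := by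
    split
    · exact Finset.sum_nonneg fun y _ => mut_nonneg hM a y
    · exact le_rfl
  exact add_nonneg h1 h2

lemma K_row_sum (hMsum : ∑ i ∈ Finset.range (n + 1), M i = 1)
    (f : (Fin n → Bool) → ℕ) (a : Fin n → Bool) :
    ∑ b : Fin n → Bool, eaKernel n f (strengthMutProb n M) a b = 1 := by
  unfold eaKernel
  rw [Finset.sum_add_distrib]
  have h2 : ∑ b : Fin n → Bool, (if b = a then
      ∑ y ∈ Finset.univ.filter (fun y => f y < f a), strengthMutProb n M a y else 0)
      = ∑ y ∈ Finset.univ.filter (fun y => f y < f a), strengthMutProb n M a y := by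
    rw [Finset.sum_ite_eq' Finset.univ a]
    simp
  have h1 : ∑ b : Fin n → Bool, (if f a ≤ f b then strengthMutProb n M a b else 0)
      = ∑ b ∈ Finset.univ.filter (fun b => f a ≤ f b), strengthMutProb n M a b := by
    rw [Finset.sum_filter]
  rw [h1, h2]
  have h3 : (Finset.univ.filter (fun y => f y < f a))
      = Finset.univ.filter (fun b => ¬ (f a ≤ f b)) := by
    ext b; simp [Nat.not_le]
  rw [h3, Finset.sum_filter_add_sum_filter_not]
  exact mut_row_sum hMsum a
end A

section B
variable {n k : ℕ} {q : ℝ} {M : ℕ → ℝ}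

/-- potential: upper bound on the expected remaining time from fitness level `oneMax a`. -/
noncomputable def gpot (n k : ℕ) (q : ℝ) (a : Fin n → Bool) : ℝ :=
  ∑ i ∈ Finset.Ico (min (oneMax n a) k) k, 1 / (((n : ℝ) - i) * q)

lemma gpot_term_nonneg (hkn : k ≤ n) (hq : 0 < q) {i : ℕ} (hi : i ∈ Finset.Ico 0 k) :
    0 ≤ 1 / (((n : ℝ) - i) * q) := by
  have hik : i < k := (Finset.mem_Ico.1 hi).2
  have h1 : (0:ℝ) < (n : ℝ) - i := by
    have : (i : ℝ) < n := by exact_mod_cast lt_of_lt_of_le hik hkn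
    linarith
  exact le_of_lt (div_pos one_pos (mul_pos h1 hq))

lemma gpot_nonneg (hkn : k ≤ n) (hq : 0 < q) (a : Fin n → Bool) : 0 ≤ gpot n k q a := by
  refine Finset.sum_nonneg fun i hi => ?_
  refine gpot_term_nonneg hkn hq (Finset.mem_Ico.2 ⟨Nat.zero_le _, (Finset.mem_Ico.1 hi).2⟩)

lemma gpot_anti (hkn : k ≤ n) (hq : 0 < q) {a b : Fin n → Bool}
    (h : oneMax n a ≤ oneMax n b) : gpot n k q b ≤ gpot n k q a := by
  refine Finset.sum_le_sum_of_subset_of_nonneg ?_ ?_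
  · apply Finset.Ico_subset_Ico_left
    exact min_le_min_right k h
  · intro i hi _
    exact gpot_term_nonneg hkn hq (Finset.mem_Ico.2 ⟨Nat.zero_le _, (Finset.mem_Ico.1 hi).2⟩)

lemma gpot_good (h : k ≤ oneMax n a) : gpot n k q a = 0 := by
  unfold gpot
  rw [min_eq_right h]
  simp

lemma oneMax_update_true {a : Fin n → Bool} {j : Fin n} (hj : a j = false) :
    oneMax n (Function.update a j true) = oneMax n a + 1 := by
  have h : (Finset.univ.filter (fun i => Function.update a j true i = true))
      = insert j (Finset.univ.filter (fun i => a i = true)) := by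
    ext i
    by_cases h : i = j <;> simp [Function.update_apply, h]
  have hnm : j ∉ Finset.univ.filter (fun i => a i = true) := by simp [hj]
  simp [oneMax, h, Finset.card_insert_of_notMem hnm]

lemma hammingDist_update_true {a : Fin n → Bool} {j : Fin n} (hj : a j = false) :
    hammingDist a (Function.update a j true) = 1 := by
  have h : (Finset.univ.filter fun i => a i ≠ Function.update a j true i) = {j} := by
    ext i
    by_cases h : i = j <;> simp [Function.update_apply, h, hj]
  simp [hammingDist, h]

lemma drift (hn : 1 ≤ n) (hkn : k ≤ n)
    (hM0 : ∀ i, 0 ≤ M i) (hMsum : ∑ i ∈ Finset.range (n + 1), M i = 1)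
    (hq : 0 < M 1 / (n : ℝ)) (a : Fin n → Bool) (ha : oneMax n a < k) :
    ∑ b : Fin n → Bool, eaKernel n (oneMax n) (strengthMutProb n M) a b
        * gpot n k (M 1 / (n : ℝ)) b
      ≤ gpot n k (M 1 / (n : ℝ)) a - 1 := by
  set q : ℝ := M 1 / (n : ℝ) with hqdef
  set K : (Fin n → Bool) → (Fin n → Bool) → ℝ := eaKernel n (oneMax n) (strengthMutProb n M)
    with hKdef
  set g : (Fin n → Bool) → ℝ := gpot n k q with hgdef
  -- every term K a b * (g a - g b) is nonnegative
  have hterm : ∀ b : Fin n → Bool, 0 ≤ K a b * (g a - g b) := by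
    intro b
    by_cases hb : oneMax n a ≤ oneMax n b
    · have := gpot_anti (q := q) hkn hq hb
      have hK := K_nonneg hM0 (oneMax n) a b
      nlinarith
    · have hba : b ≠ a := by
        intro h; exact hb (le_of_eq (by rw [h]))
      have : K a b = 0 := by
        simp [hKdef, eaKernel, hb, hba]
      simp [this]
  -- the improving single-bit flips
  set Z : Finset (Fin n) := Finset.univ.filter (fun j => a j = false) with hZdef
  have hZcard : Z.card = n - oneMax n a := by
    have := Finset.card_filter_add_card_filter_not
      (s := (Finset.univ : Finset (Fin n))) (p := fun i => a i = true)
    have h2 : (Finset.univ.filter (fun i : Fin n => ¬ a i = true)) = Z := by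
      ext i; simp [hZdef]
    rw [h2, Finset.card_univ, Fintype.card_fin] at this
    have h4 : oneMax n a = (Finset.univ.filter (fun i : Fin n => a i = true)).card := rfl
    omega
  have hZne : 1 ≤ Z.card := by
    have := oneMax_le a; omega
  -- value of the drop for a single improving flip
  have hflip : ∀ j ∈ Z, K a (Function.update a j true) * (g a - g (Function.update a j true))
      = 1 / ((n : ℝ) - oneMax n a) := by
    intro j hj
    have hjf : a j = false := by simpa [hZdef] using hj
    have hOM : oneMax n (Function.update a j true) = oneMax n a + 1 := oneMax_update_true hjf
    have hne : Function.update a j true ≠ a := by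
      intro h
      have := congrFun h j
      simp [hjf] at this
    have hKval : K a (Function.update a j true) = q := by
      have hle : oneMax n a ≤ oneMax n (Function.update a j true) := by omega
      simp only [hKdef, eaKernel, if_pos hle, if_neg hne, add_zero]
      simp [strengthMutProb, hammingDist_update_true hjf, hqdef]
    have hgval : g a - g (Function.update a j true) = 1 / (((n : ℝ) - oneMax n a) * q) := by
      have hmina : min (oneMax n a) k = oneMax n a := min_eq_left (le_of_lt ha)
      have hminb : min (oneMax n (Function.update a j true)) k = oneMax n a + 1 := by
        rw [hOM]; exact min_eq_left ha
      simp only [hgdef, gpot, hmina, hminb]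
      rw [Finset.sum_eq_sum_Ico_succ_bot ha]
      ring
    rw [hKval, hgval]
    have hnq : ((n : ℝ) - oneMax n a) ≠ 0 := by
      have : (oneMax n a : ℝ) < n := by exact_mod_cast lt_of_lt_of_le ha hkn
      linarith
    field_simp
  -- the improving flips are pairwise distinct
  have hinj : Set.InjOn (fun j => Function.update a j true) Z := by
    intro j hj j' hj' h
    have hj'f : a j' = false := by simpa [hZdef] using hj'
    by_contra hne
    have hj'j : j' ≠ j := fun hh => hne hh.symm
    have h2 : Function.update a j true j' = Function.update a j' true j' := congrFun h j'
    rw [Function.update_self, Function.update_of_ne hj'j] at h2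
    simp [hj'f] at h2
  -- lower bound on the total drop
  have hdrop : (1:ℝ) ≤ ∑ b : Fin n → Bool, K a b * (g a - g b) := by
    have hsub : Z.image (fun j => Function.update a j true) ⊆ Finset.univ :=
      Finset.subset_univ _
    have h5 : ∑ b ∈ Z.image (fun j => Function.update a j true), K a b * (g a - g b)
        ≤ ∑ b : Fin n → Bool, K a b * (g a - g b) :=
      Finset.sum_le_sum_of_subset_of_nonneg hsub (fun b _ _ => hterm b)
    have h6 : ∑ b ∈ Z.image (fun j => Function.update a j true), K a b * (g a - g b)
        = ∑ j ∈ Z, K a (Function.update a j true) * (g a - g (Function.update a j true)) :=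
      Finset.sum_image (fun j hj j' hj' h => hinj hj hj' h)
    have h7 : ∑ j ∈ Z, K a (Function.update a j true) * (g a - g (Function.update a j true))
        = (Z.card : ℝ) * (1 / ((n : ℝ) - oneMax n a)) := by
      rw [Finset.sum_congr rfl hflip, Finset.sum_const, nsmul_eq_mul]
    have h8 : (Z.card : ℝ) * (1 / ((n : ℝ) - oneMax n a)) = 1 := by
      have hcast : ((n : ℝ) - oneMax n a) = (Z.card : ℝ) := by
        rw [hZcard]
        have := oneMax_le a
        push_cast [Nat.cast_sub this]
        ring
      rw [hcast]
      have hpos : (0:ℝ) < (Z.card : ℝ) := by exact_mod_cast hZne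
      field_simp
    rw [h6, h7, h8] at h5
    exact h5
  -- conclude
  have hrow : ∑ b : Fin n → Bool, K a b = 1 := K_row_sum hMsum (oneMax n) a
  have hexp : ∑ b : Fin n → Bool, K a b * (g a - g b)
      = g a - ∑ b : Fin n → Bool, K a b * g b := by
    have hb : ∀ b ∈ (Finset.univ : Finset (Fin n → Bool)),
        K a b * (g a - g b) = K a b * g a - K a b * g b := fun b _ => by ring
    rw [Finset.sum_congr rfl hb, Finset.sum_sub_distrib, ← Finset.sum_mul, hrow, one_mul]
  linarith [hdrop, hexp]
end B

section C
variable {Ω S : Type*} [MeasurableSpace Ω] [MeasurableSpace S] [Fintype S]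
  [MeasurableSingletonClass S] [DecidableEq S]
variable {μ : Measure Ω} {x : ℕ → Ω → S} {init : S → ℝ} {K : S → S → ℝ}

/-- weight of a finite trajectory -/
def pathW (init : S → ℝ) (K : S → S → ℝ) (t : ℕ) (a : ℕ → S) : ℝ :=
  init (a 0) * ∏ i ∈ Finset.range t, K (a i) (a (i + 1))

/-- extend `v : Fin (t+1) → S` to `ℕ → S` by clamping -/
def clampPath {S : Type*} (t : ℕ) (v : Fin (t + 1) → S) : ℕ → S :=
  fun s => v ⟨min s t, by omega⟩

lemma clampPath_le {t : ℕ} (v : Fin (t + 1) → S) {s : ℕ} (hs : s ≤ t) :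
    clampPath t v s = v ⟨s, by omega⟩ := by
  unfold clampPath
  congr 1
  exact Fin.ext (by simp [Nat.min_eq_left hs])

lemma pathW_nonneg (h0 : ∀ a, 0 ≤ init a) (hK : ∀ a b, 0 ≤ K a b) (t : ℕ) (a : ℕ → S) :
    0 ≤ pathW init K t a :=
  mul_nonneg (h0 _) (Finset.prod_nonneg fun i _ => hK _ _)

lemma cyl_measure (hchain : IsMarkovProcess μ x init K)
    (h0 : ∀ a, 0 ≤ init a) (hK : ∀ a b, 0 ≤ K a b) :
    ∀ (t : ℕ) (a : ℕ → S), μ {ω | ∀ s ≤ t, x s ω = a s} = ENNReal.ofReal (pathW init K t a) := by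
  intro t
  induction t with
  | zero =>
    intro a
    have hset : {ω | ∀ s ≤ 0, x s ω = a s} = {ω | x 0 ω = a 0} := by
      ext ω; simp [Nat.le_zero]
    rw [hset, hchain.2.1 (a 0)]
    simp [pathW]
  | succ t ih =>
    intro a
    rw [hchain.2.2 t a, ih a, ← ENNReal.ofReal_mul (pathW_nonneg h0 hK t a)]
    congr 1
    unfold pathW
    rw [Finset.prod_range_succ]
    ring

lemma cyl_measurable (hx : ∀ t, Measurable (x t)) (t : ℕ) (a : ℕ → S) :
    MeasurableSet {ω | ∀ s ≤ t, x s ω = a s} := by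
  have : {ω | ∀ s ≤ t, x s ω = a s} = ⋂ s, ⋂ (_ : s ≤ t), (x s) ⁻¹' {a s} := by
    ext ω; simp [Set.mem_iInter]
  rw [this]
  exact MeasurableSet.iInter fun s => MeasurableSet.iInter fun _ =>
    hx s (measurableSet_singleton _)

lemma event_decomp (hx : ∀ t, Measurable (x t)) (B : Finset S) (t : ℕ) :
    μ {ω | ∀ s ≤ t, x s ω ∈ B}
      = ∑ v ∈ Fintype.piFinset (fun _ : Fin (t + 1) => B),
          μ {ω | ∀ s ≤ t, x s ω = clampPath t v s} := by
  have hev : {ω | ∀ s ≤ t, x s ω ∈ B}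
      = ⋃ v ∈ Fintype.piFinset (fun _ : Fin (t + 1) => B),
          {ω | ∀ s ≤ t, x s ω = clampPath t v s} := by
    ext ω
    simp only [Set.mem_setOf_eq, Set.mem_iUnion]
    constructor
    · intro h
      refine ⟨fun s => x s ω, ?_, ?_⟩
      · exact Fintype.mem_piFinset.2 fun i => h i (Nat.lt_succ_iff.1 i.isLt)
      · intro s hs
        rw [clampPath_le _ hs]
    · rintro ⟨v, hv, hω⟩ s hs
      rw [hω s hs, clampPath_le _ hs]
      exact Fintype.mem_piFinset.1 hv _
  rw [hev]
  refine measure_biUnion_finset ?_ (fun v _ => cyl_measurable hx t _)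
  intro v hv v' hv' hne
  refine Set.disjoint_left.2 fun ω h1 h2 => hne ?_
  funext i
  have e1 := h1 i (Nat.lt_succ_iff.1 i.isLt)
  have e2 := h2 i (Nat.lt_succ_iff.1 i.isLt)
  rw [clampPath_le _ (Nat.lt_succ_iff.1 i.isLt)] at e1 e2
  simp only [Fin.eta] at e1 e2
  rw [← e1, ← e2]

lemma clampPath_snoc_le {t : ℕ} (v : Fin (t + 1) → S) (b : S) {s : ℕ} (hs : s ≤ t) :
    clampPath (t + 1) (Fin.snoc v b) s = clampPath t v s := by
  rw [clampPath_le _ (le_trans hs (Nat.le_succ t)), clampPath_le _ hs]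
  have : (⟨s, by omega⟩ : Fin (t + 2)) = Fin.castSucc ⟨s, by omega⟩ := Fin.ext rfl
  rw [this, Fin.snoc_castSucc]

lemma clampPath_snoc_top {t : ℕ} (v : Fin (t + 1) → S) (b : S) :
    clampPath (t + 1) (Fin.snoc v b) (t + 1) = b := by
  rw [clampPath_le _ (le_refl (t + 1))]
  have : (⟨t + 1, by omega⟩ : Fin (t + 2)) = Fin.last (t + 1) := Fin.ext rfl
  rw [this, Fin.snoc_last]

lemma pathW_snoc {t : ℕ} (v : Fin (t + 1) → S) (b : S) :
    pathW init K (t + 1) (clampPath (t + 1) (Fin.snoc v b))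
      = pathW init K t (clampPath t v) * K (v (Fin.last t)) b := by
  unfold pathW
  rw [Finset.prod_range_succ]
  have h0 : clampPath (t + 1) (Fin.snoc v b) 0 = clampPath t v 0 :=
    clampPath_snoc_le v b (Nat.zero_le t)
  have hprod : ∏ i ∈ Finset.range t, K (clampPath (t + 1) (Fin.snoc v b) i)
      (clampPath (t + 1) (Fin.snoc v b) (i + 1))
      = ∏ i ∈ Finset.range t, K (clampPath t v i) (clampPath t v (i + 1)) := by
    refine Finset.prod_congr rfl fun i hi => ?_
    have hi' : i < t := Finset.mem_range.1 hi
    rw [clampPath_snoc_le v b (le_of_lt hi'), clampPath_snoc_le v b hi']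
  have ht : clampPath (t + 1) (Fin.snoc v b) t = clampPath t v t :=
    clampPath_snoc_le v b (le_refl t)
  have htop := clampPath_snoc_top v b
  have hlast : clampPath t v t = v (Fin.last t) := by
    rw [clampPath_le _ (le_refl t)]; rfl
  rw [h0, hprod, ht, htop, hlast]
  ring

lemma sum_piFinset_succ {t : ℕ} (B : Finset S) (f : (Fin (t + 2) → S) → ℝ) :
    ∑ v ∈ Fintype.piFinset (fun _ : Fin (t + 2) => B), f v
      = ∑ v ∈ Fintype.piFinset (fun _ : Fin (t + 1) => B), ∑ b ∈ B, f (Fin.snoc v b) := by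
  rw [← Finset.sum_product']
  refine Finset.sum_nbij' (fun v => (Fin.init v, v (Fin.last (t + 1))))
    (fun p => Fin.snoc p.1 p.2) ?_ ?_ ?_ ?_ ?_
  · intro v hv
    refine Finset.mem_product.2 ⟨?_, ?_⟩
    · exact Fintype.mem_piFinset.2 fun i => Fintype.mem_piFinset.1 hv _
    · exact Fintype.mem_piFinset.1 hv _
  · intro p hp
    have h1 := (Finset.mem_product.1 hp).1
    have h2 := (Finset.mem_product.1 hp).2
    refine Fintype.mem_piFinset.2 fun i => ?_
    refine Fin.lastCases ?_ ?_ i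
    · simpa [Fin.snoc_last] using h2
    · intro j; simpa [Fin.snoc_castSucc] using Fintype.mem_piFinset.1 h1 j
  · intro v _; exact Fin.snoc_init_self v
  · intro p _; simp [Fin.init_snoc, Fin.snoc_last]
  · intro v _; rw [Fin.snoc_init_self]
end C

section D
variable {S : Type*} [MeasurableSpace S] [MeasurableSingletonClass S] [Fintype S] [DecidableEq S]
variable (init : S → ℝ) (K : S → S → ℝ) (R : Finset S) (g : S → ℝ)

/-- probability of staying in `R` through time `t` -/
def pathF (t : ℕ) : ℝ :=
  ∑ v ∈ Fintype.piFinset (fun _ : Fin (t + 1) => R), pathW init K t (clampPath t v)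

/-- expected potential at time `t`, restricted to staying in `R` -/
def pathG (t : ℕ) : ℝ :=
  ∑ v ∈ Fintype.piFinset (fun _ : Fin (t + 1) => R),
    pathW init K t (clampPath t v) * g (v (Fin.last t))

variable {init K R g}

lemma pathFG_step (h0 : ∀ a, 0 ≤ init a) (hK : ∀ a b, 0 ≤ K a b) (hg : ∀ b, 0 ≤ g b)
    (hdrift : ∀ a ∈ R, ∑ b : S, K a b * g b ≤ g a - 1) (t : ℕ) :
    pathF init K R t + pathG init K R g (t + 1) ≤ pathG init K R g t := by
  have hGsucc : pathG init K R g (t + 1)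
      = ∑ v ∈ Fintype.piFinset (fun _ : Fin (t + 1) => R),
          pathW init K t (clampPath t v) * ∑ b ∈ R, K (v (Fin.last t)) b * g b := by
    unfold pathG
    rw [sum_piFinset_succ R]
    refine Finset.sum_congr rfl fun v _ => ?_
    rw [Finset.mul_sum]
    refine Finset.sum_congr rfl fun b _ => ?_
    rw [pathW_snoc v b, Fin.snoc_last]
    ring
  unfold pathF
  rw [hGsucc, ← Finset.sum_add_distrib]
  refine Finset.sum_le_sum fun v hv => ?_
  have hvlast : v (Fin.last t) ∈ R := Fintype.mem_piFinset.1 hv _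
  have hW := pathW_nonneg h0 hK t (clampPath t v)
  have hsub : ∑ b ∈ R, K (v (Fin.last t)) b * g b ≤ ∑ b : S, K (v (Fin.last t)) b * g b :=
    Finset.sum_le_sum_of_subset_of_nonneg (Finset.subset_univ R)
      (fun b _ _ => mul_nonneg (hK _ _) (hg _))
  have hd := hdrift _ hvlast
  nlinarith [mul_le_mul_of_nonneg_left (le_trans hsub hd) hW]

lemma pathG_nonneg (h0 : ∀ a, 0 ≤ init a) (hK : ∀ a b, 0 ≤ K a b) (hg : ∀ b, 0 ≤ g b) (t : ℕ) :
    0 ≤ pathG init K R g t :=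
  Finset.sum_nonneg fun v _ => mul_nonneg (pathW_nonneg h0 hK _ _) (hg _)

lemma pathF_telescope (h0 : ∀ a, 0 ≤ init a) (hK : ∀ a b, 0 ≤ K a b) (hg : ∀ b, 0 ≤ g b)
    (hdrift : ∀ a ∈ R, ∑ b : S, K a b * g b ≤ g a - 1) (N : ℕ) :
    ∑ t ∈ Finset.range N, pathF init K R t ≤ pathG init K R g 0 := by
  have key : ∀ N, ∑ t ∈ Finset.range N, pathF init K R t + pathG init K R g N
      ≤ pathG init K R g 0 := by
    intro N
    induction N with
    | zero => simp
    | succ N ih =>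
      rw [Finset.sum_range_succ]
      have := pathFG_step h0 hK hg hdrift N
      linarith
  have := key N
  have := pathG_nonneg (R := R) h0 hK hg N
  linarith

lemma pathG_zero : pathG init K R g 0 = ∑ b ∈ R, init b * g b := by
  unfold pathG
  refine Finset.sum_nbij' (fun v => v (Fin.last 0)) (fun b => fun _ => b) ?_ ?_ ?_ ?_ ?_
  · intro v hv; exact Fintype.mem_piFinset.1 hv _
  · intro b hb; exact Fintype.mem_piFinset.2 fun _ => hb
  · intro v _
    funext i
    have : i = Fin.last 0 := Fin.ext (by omega)
    rw [this]
  · intro b _; rfl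
  · intro v _
    simp [pathW, clampPath]
end D

section E
variable {Ω S : Type*} (x : ℕ → Ω → S) (good : S → Prop)

lemma hitTime_eq_tsum (ω : Ω) :
    hitTime x good ω
      = ∑' t : ℕ, Set.indicator {ω' | ∀ s ≤ t, ¬ good (x s ω')} (fun _ => (1 : ENNReal)) ω := by
  classical
  by_cases hex : ∃ t, good (x t ω)
  · set m := Nat.find hex with hm
    have hind : ∀ t : ℕ,
        Set.indicator {ω' | ∀ s ≤ t, ¬ good (x s ω')} (fun _ => (1 : ENNReal)) ω
          = if t < m then 1 else 0 := by
      intro t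
      rw [Set.indicator_apply]
      by_cases h : t < m
      · rw [if_pos h, if_pos]
        intro s hs hg
        exact Nat.find_min hex (lt_of_le_of_lt hs h) hg
      · rw [if_neg h, if_neg]
        intro hall
        exact hall m (by omega) (Nat.find_spec hex)
    have htsum : ∑' t : ℕ, Set.indicator {ω' | ∀ s ≤ t, ¬ good (x s ω')}
        (fun _ => (1 : ENNReal)) ω = (m : ENNReal) := by
      rw [tsum_congr hind]
      rw [tsum_eq_sum (s := Finset.range m) (by intro b hb; rw [if_neg]; simpa using hb)]
      have : ∀ t ∈ Finset.range m, (if t < m then (1 : ENNReal) else 0) = 1 :=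
        fun t ht => if_pos (Finset.mem_range.1 ht)
      rw [Finset.sum_congr rfl this, Finset.sum_const, Finset.card_range, nsmul_eq_mul, mul_one]
    rw [htsum]
    refine le_antisymm (sInf_le ⟨m, rfl, Nat.find_spec hex⟩) (le_sInf ?_)
    rintro r ⟨t, rfl, hg⟩
    exact_mod_cast Nat.find_min' hex hg
  · push_neg at hex
    have hset : {r : ENNReal | ∃ t : ℕ, r = (t : ENNReal) ∧ good (x t ω)} = ∅ := by
      ext r
      simp only [Set.mem_setOf_eq, Set.mem_empty_iff_false, iff_false, not_exists]
      rintro t ⟨_, hg⟩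
      exact hex t hg
    have hind : ∀ t : ℕ,
        Set.indicator {ω' | ∀ s ≤ t, ¬ good (x s ω')} (fun _ => (1 : ENNReal)) ω = 1 := by
      intro t
      exact Set.indicator_of_mem
        (show ω ∈ {ω' | ∀ s ≤ t, ¬ good (x s ω')} from fun s _ => hex s) _
    rw [hitTime, hset, sInf_empty, tsum_congr hind]
    exact (ENNReal.tsum_const_eq_top_of_ne_zero one_ne_zero).symm
end E

lemma harm_succ (m : ℕ) : harm (m + 1) = harm m + 1 / ((m : ℝ) + 1) :=
  Finset.sum_range_succ _ m

lemma harm_sum_diff (n : ℕ) : ∀ k, k ≤ n →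
    ∑ i ∈ Finset.range k, 1 / ((n : ℝ) - i) = harm n - harm (n - k) := by
  intro k
  induction k with
  | zero => intro _; simp
  | succ k ih =>
    intro hk
    rw [Finset.sum_range_succ, ih (by omega)]
    have hm : n - k = (n - (k + 1)) + 1 := by omega
    have hcast : ((n - (k + 1) : ℕ) : ℝ) + 1 = (n : ℝ) - k := by
      have h1 : ((n - (k + 1) : ℕ) : ℝ) = (n : ℝ) - (k + 1) := by
        push_cast [Nat.cast_sub hk]; ring
      rw [h1]; ring
    rw [hm, harm_succ, hcast]
    ring

/-- Fixed-target upper bound on OneMax for an elitist (1+1) algorithm with mutation-strength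
distribution `M`, initialized with the all-zero string: with `q = P[ℓ=1]/n > 0`, for every
target `1 ≤ k ≤ n`, `E[T_k] ≤ (H_n − H_{n−k}) / q`. -/
theorem elitist_oneMax_fixed_target_upper_zero_init
    (n : ℕ) (hn : 1 ≤ n)
    (M : ℕ → ℝ) (hMnonneg : ∀ i, 0 ≤ M i)
    (hMsum : ∑ i ∈ Finset.range (n + 1), M i = 1)
    (hMsupp : ∀ i, n < i → M i = 0)
    (hq : 0 < M 1 / (n : ℝ))
    {Ω : Type*} [MeasurableSpace Ω] (μ : Measure Ω) [IsProbabilityMeasure μ]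
    (x : ℕ → Ω → Fin n → Bool)
    (hchain : IsMarkovProcess μ x
      (fun a => if a = (fun _ => false) then 1 else 0)
      (eaKernel n (oneMax n) (strengthMutProb n M)))
    (k : ℕ) (hk1 : 1 ≤ k) (hkn : k ≤ n) :
    ∫⁻ ω, hitTime x (fun y => k ≤ oneMax n y) ω ∂μ
      ≤ ENNReal.ofReal ((harm n - harm (n - k)) / (M 1 / (n : ℝ))) := by
  obtain ⟨hxmeas, hinit0, hmark⟩ := hchain
  set q : ℝ := M 1 / (n : ℝ) with hqdef
  set init : (Fin n → Bool) → ℝ := (fun a => if a = (fun _ => false) then 1 else 0)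
    with hinitdef
  set K : (Fin n → Bool) → (Fin n → Bool) → ℝ := eaKernel n (oneMax n) (strengthMutProb n M)
    with hKdef
  set R : Finset (Fin n → Bool) := Finset.univ.filter (fun b => oneMax n b < k) with hRdef
  set g : (Fin n → Bool) → ℝ := gpot n k q with hgdef
  have hchain' : IsMarkovProcess μ x init K := ⟨hxmeas, hinit0, hmark⟩
  have h0 : ∀ a, 0 ≤ init a := by
    intro a
    simp only [hinitdef]
    split <;> norm_num
  have hK0 : ∀ a b, 0 ≤ K a b := fun a b => K_nonneg hMnonneg (oneMax n) a b
  have hg0 : ∀ b, 0 ≤ g b := fun b => gpot_nonneg hkn hq b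
  have hdrift : ∀ a ∈ R, ∑ b : Fin n → Bool, K a b * g b ≤ g a - 1 := by
    intro a ha
    exact drift hn hkn hMnonneg hMsum hq a (Finset.mem_filter.1 ha).2
  -- measurability of the "still bad at all times ≤ t" events
  have Ameas : ∀ t : ℕ, MeasurableSet {ω | ∀ s ≤ t, ¬ k ≤ oneMax n (x s ω)} := by
    intro t
    have : {ω | ∀ s ≤ t, ¬ k ≤ oneMax n (x s ω)}
        = ⋂ s, ⋂ (_ : s ≤ t), (x s) ⁻¹' {y | ¬ k ≤ oneMax n y} := by
      ext ω; simp [Set.mem_iInter]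
    rw [this]
    exact MeasurableSet.iInter fun s => MeasurableSet.iInter fun _ =>
      hxmeas s ((Set.toFinite _).measurableSet)
  -- expectation of hitting time as a sum of tail probabilities
  have h1 : ∫⁻ ω, hitTime x (fun y => k ≤ oneMax n y) ω ∂μ
      = ∑' t : ℕ, μ {ω | ∀ s ≤ t, ¬ k ≤ oneMax n (x s ω)} := by
    rw [lintegral_congr (fun ω => hitTime_eq_tsum x (fun y => k ≤ oneMax n y) ω)]
    rw [lintegral_tsum (μ := μ)
      (f := fun (t : ℕ) (ω : Ω) =>
        Set.indicator {ω' | ∀ s ≤ t, ¬ k ≤ oneMax n (x s ω')} (fun _ => (1 : ENNReal)) ω)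
      (fun t => ((measurable_one).indicator (Ameas t)).aemeasurable)]
    exact tsum_congr fun t => lintegral_indicator_one (Ameas t)
  -- tail probabilities via path sums
  have h2 : ∀ t : ℕ, {ω | ∀ s ≤ t, ¬ k ≤ oneMax n (x s ω)} = {ω | ∀ s ≤ t, x s ω ∈ R} := by
    intro t
    ext ω
    simp [hRdef, Nat.not_le]
  have h3 : ∀ t : ℕ, μ {ω | ∀ s ≤ t, x s ω ∈ R} = ENNReal.ofReal (pathF init K R t) := by
    intro t
    rw [event_decomp hxmeas R t]
    unfold pathF
    rw [ENNReal.ofReal_sum_of_nonneg (fun v _ => pathW_nonneg h0 hK0 t _)]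
    exact Finset.sum_congr rfl fun v _ => cyl_measure hchain' h0 hK0 t _
  -- partial sums are bounded by the initial potential
  have h4 : ∀ s : Finset ℕ, ∑ t ∈ s, ENNReal.ofReal (pathF init K R t)
      ≤ ENNReal.ofReal (pathG init K R g 0) := by
    intro s
    have hsub : s ⊆ Finset.range (s.sup id + 1) := by
      intro t ht
      exact Finset.mem_range.2 (Nat.lt_succ_of_le (Finset.le_sup (f := id) ht))
    calc ∑ t ∈ s, ENNReal.ofReal (pathF init K R t)
        ≤ ∑ t ∈ Finset.range (s.sup id + 1), ENNReal.ofReal (pathF init K R t) :=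
          Finset.sum_le_sum_of_subset hsub
      _ = ENNReal.ofReal (∑ t ∈ Finset.range (s.sup id + 1), pathF init K R t) :=
          (ENNReal.ofReal_sum_of_nonneg (fun t _ =>
            Finset.sum_nonneg fun v _ => pathW_nonneg h0 hK0 t _)).symm
      _ ≤ ENNReal.ofReal (pathG init K R g 0) :=
          ENNReal.ofReal_le_ofReal (pathF_telescope h0 hK0 hg0 hdrift _)
  -- the initial potential equals the claimed bound
  have h6 : pathG init K R g 0 = (harm n - harm (n - k)) / q := by
    rw [pathG_zero]
    have hz : oneMax n ((fun _ => false) : Fin n → Bool) = 0 := by simp [oneMax]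
    have hzR : ((fun _ => false) : Fin n → Bool) ∈ R :=
      Finset.mem_filter.2 ⟨Finset.mem_univ _, by rw [hz]; omega⟩
    have hterm : ∀ b ∈ R, init b * g b
        = if b = (fun _ => false) then g b else 0 := by
      intro b _
      by_cases h : b = (fun _ => false) <;> simp [hinitdef, h]
    rw [Finset.sum_congr rfl hterm, Finset.sum_ite_eq' R _ g, if_pos hzR]
    show gpot n k q (fun _ => false) = _
    unfold gpot
    rw [hz, Nat.zero_min, ← Finset.range_eq_Ico]
    have hterm2 : ∀ i ∈ Finset.range k, 1 / (((n : ℝ) - i) * q) = (1 / ((n : ℝ) - i)) / q :=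
      fun i _ => (div_div 1 _ q).symm
    rw [Finset.sum_congr rfl hterm2, ← Finset.sum_div, harm_sum_diff n k hkn]
  -- conclusion
  rw [h1, tsum_congr (fun t => by rw [h2 t, h3 t])]
  rw [ENNReal.tsum_eq_iSup_sum]
  rw [← h6]
  exact iSup_le h4
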